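/- Closed-form best response (equation (9)). Fix a user k and positive powers ρ_i > 0 for all i ≠ k. Let ρ*_k = sqrt( (Σ_{i ≠ k} ρ_i (b i)^α) / (Σ_{i ≠ k} (b k)^{2α} / (ρ_i (b i)^α)) ). Then ρ*_k > 0 and ρ*_k is the unique global minimizer of x ↦ μ_k(Function.update ρ k x) over the positive reals: μ_k(Function.update ρ k ρ*_k) ≤ μ_k(Function.update ρ k x) for all x > 0, with equality only when x = ρ*_k. -/

import Mathlib

/-- ξ k = ρ k * (b k)^α -/
noncomputable def xi (K : ℕ) (α : ℝ) (b ρ : Fin K → ℝ) (k : Fin K) : ℝ :=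
  ρ k * b k ^ α

/-- Payoff of user k: μ_k(ρ) = (Σ_{i ≠ k} ξ i) / ξ k + ξ k * Σ_{i ≠ k} 1 / ξ i -/
noncomputable def mu (K : ℕ) (α : ℝ) (b ρ : Fin K → ℝ) (k : Fin K) : ℝ :=
  (∑ i ∈ Finset.univ.erase k, xi K α b ρ i) / xi K α b ρ k
    + xi K α b ρ k * ∑ i ∈ Finset.univ.erase k, 1 / xi K α b ρ i

/-- Potential function u(ρ) = (1/2) * Σ_k μ_k(ρ) -/
noncomputable def potential (K : ℕ) (α : ℝ) (b ρ : Fin K → ℝ) : ℝ :=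
  (1 / 2) * ∑ k, mu K α b ρ k

/-- Closed-form best response (equation (9)): ρ*_k is the unique global
    minimizer of user k's payoff over its own positive powers. -/
theorem best_response_closed_form (K : ℕ) (hK : 2 ≤ K) (α : ℝ)
    (b : Fin K → ℝ) (hb : ∀ k, 0 < b k) (k : Fin K) (ρ : Fin K → ℝ)
    (hρ : ∀ i, i ≠ k → 0 < ρ i) :
    0 < Real.sqrt ((∑ i ∈ Finset.univ.erase k, ρ i * b i ^ α) /
        (∑ i ∈ Finset.univ.erase k, b k ^ (2 * α) / (ρ i * b i ^ α))) ∧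
    (∀ x : ℝ, 0 < x →
      mu K α b (Function.update ρ k
        (Real.sqrt ((∑ i ∈ Finset.univ.erase k, ρ i * b i ^ α) /
          (∑ i ∈ Finset.univ.erase k, b k ^ (2 * α) / (ρ i * b i ^ α))))) k
        ≤ mu K α b (Function.update ρ k x) k) ∧
    (∀ x : ℝ, 0 < x →
      mu K α b (Function.update ρ k
        (Real.sqrt ((∑ i ∈ Finset.univ.erase k, ρ i * b i ^ α) /
          (∑ i ∈ Finset.univ.erase k, b k ^ (2 * α) / (ρ i * b i ^ α))))) k
        = mu K α b (Function.update ρ k x) k →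
      x = Real.sqrt ((∑ i ∈ Finset.univ.erase k, ρ i * b i ^ α) /
          (∑ i ∈ Finset.univ.erase k, b k ^ (2 * α) / (ρ i * b i ^ α)))) := by
  set c : ℝ := b k ^ α with hc
  have hcpos : 0 < c := Real.rpow_pos_of_pos (hb k) α
  set S : ℝ := ∑ i ∈ Finset.univ.erase k, ρ i * b i ^ α with hS
  set T : ℝ := ∑ i ∈ Finset.univ.erase k, 1 / (ρ i * b i ^ α) with hT
  have hne : (Finset.univ.erase k).Nonempty := by
    obtain ⟨i, hi⟩ := Fintype.exists_ne_of_one_lt_card (by rw [Fintype.card_fin]; omega) k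
    exact ⟨i, Finset.mem_erase.2 ⟨hi, Finset.mem_univ i⟩⟩
  have hterm : ∀ i ∈ Finset.univ.erase k, 0 < ρ i * b i ^ α := fun i hi =>
    mul_pos (hρ i (Finset.ne_of_mem_erase hi)) (Real.rpow_pos_of_pos (hb i) α)
  have hSpos : 0 < S := Finset.sum_pos hterm hne
  have hTpos : 0 < T := Finset.sum_pos (fun i hi => one_div_pos.2 (hterm i hi)) hne
  -- denominator sum equals c^2 * T
  have hc2 : b k ^ (2 * α) = c ^ 2 := by
    rw [two_mul, Real.rpow_add (hb k), sq]
  have hden : (∑ i ∈ Finset.univ.erase k, b k ^ (2 * α) / (ρ i * b i ^ α)) = c ^ 2 * T := by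
    rw [hT, Finset.mul_sum]
    exact Finset.sum_congr rfl fun i hi => by rw [hc2]; ring
  have hfrac : S / (c ^ 2 * T) ≥ 0 := le_of_lt (by positivity)
  set r : ℝ := Real.sqrt (S / (c ^ 2 * T)) with hr
  have hrpos : 0 < r := Real.sqrt_pos.2 (by positivity)
  have hrsq : r ^ 2 = S / (c ^ 2 * T) := Real.sq_sqrt hfrac
  have hkey : (r * c) ^ 2 * T = S := by
    field_simp [mul_pow, hrsq]
    rw [hrsq, mul_assoc, div_mul_cancel₀ _ (by positivity)]
  -- mu formula
  have hmu : ∀ x : ℝ, mu K α b (Function.update ρ k x) k = S / (x * c) + (x * c) * T := by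
    intro x
    have h1 : (∑ i ∈ Finset.univ.erase k, xi K α b (Function.update ρ k x) i) = S := by
      refine Finset.sum_congr rfl fun i hi => ?_
      simp [xi, Function.update_of_ne (Finset.ne_of_mem_erase hi)]
    have h2 : (∑ i ∈ Finset.univ.erase k, 1 / xi K α b (Function.update ρ k x) i) = T := by
      refine Finset.sum_congr rfl fun i hi => ?_
      simp [xi, Function.update_of_ne (Finset.ne_of_mem_erase hi)]
    have h3 : xi K α b (Function.update ρ k x) k = x * c := by
      simp [xi, hc]
    rw [mu, h1, h2, h3]
  have hdiff : ∀ x : ℝ, 0 < x →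
      mu K α b (Function.update ρ k x) k - mu K α b (Function.update ρ k r) k
        = T * (x * c - r * c) ^ 2 / (x * c) := by
    intro x hx
    rw [hmu, hmu]
    have hxne : x ≠ 0 := ne_of_gt hx
    have hrne : r ≠ 0 := ne_of_gt hrpos
    have hcne : c ≠ 0 := ne_of_gt hcpos
    rw [← hkey]
    field_simp
    ring
  rw [hden]
  refine ⟨hrpos, fun x hx => ?_, fun x hx heq => ?_⟩
  · have := hdiff x hx
    nlinarith [sq_nonneg (x * c - r * c), mul_pos hx hcpos,
      mul_nonneg hTpos.le (sq_nonneg (x * c - r * c)),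
      div_nonneg (mul_nonneg hTpos.le (sq_nonneg (x * c - r * c))) (mul_pos hx hcpos).le]
  · have hd := hdiff x hx
    rw [← heq, sub_self] at hd
    have hxc : x * c ≠ 0 := ne_of_gt (mul_pos hx hcpos)
    have h0 : T * (x * c - r * c) ^ 2 = 0 := by
      rcases div_eq_zero_iff.1 hd.symm with h | h
      · exact h
      · exact absurd h hxc
    have : (x * c - r * c) ^ 2 = 0 := by
      rcases mul_eq_zero.1 h0 with h | h
      · exact absurd h (ne_of_gt hTpos)
      · exact h
    have := pow_eq_zero_iff (n := 2) (by norm_num) |>.1 this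
    have : x * c = r * c := by linarith
    exact mul_right_cancel₀ (ne_of_gt hcpos) this
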